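/- Over an algebraically closed field F, the subset of tuples (g₁,…,g_r) ∈ F[x]_{≤p₁} × … × F[x]_{≤p_r} (r > 1) such that some g_i has exact degree p_i and the ideal (g₁,…,g_r) contains 1 is Zariski open and non-empty. -/

import Mathlib

/-- The Zariski topology on the affine space `σ → F` over a field `F`. -/
def affineZariskiTopology (σ F : Type*) [Field F] : TopologicalSpace (σ → F) :=
  TopologicalSpace.generateFrom
    {U | ∃ S : Set (MvPolynomial σ F),
      Uᶜ = {c | ∀ p ∈ S, MvPolynomial.eval c p = 0}}

/-- The polynomial of degree `≤ p` with coefficient tuple `c : Fin (p+1) → F`. -/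
noncomputable def polyOfCoeffs {F : Type*} [Field F] {p : ℕ} (c : Fin (p + 1) → F) :
    Polynomial F :=
  ∑ i : Fin (p + 1), Polynomial.C (c i) * Polynomial.X ^ (i : ℕ)

open Polynomial Finset

section Aux
variable {F : Type*} [Field F]

lemma polyOfCoeffs_coeff {p : ℕ} (c : Fin (p + 1) → F) (m : ℕ) :
    (polyOfCoeffs c).coeff m = if h : m < p + 1 then c ⟨m, h⟩ else 0 := by
  unfold polyOfCoeffs
  rw [finset_sum_coeff]
  simp only [coeff_C_mul, coeff_X_pow, mul_ite, mul_one, mul_zero]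
  split
  · rename_i h
    rw [Finset.sum_eq_single (⟨m, h⟩ : Fin (p + 1))]
    · simp
    · intro b _ hb
      rw [if_neg]
      intro hmb
      exact hb (by ext; simp [← hmb])
    · simp
  · rename_i h
    apply Finset.sum_eq_zero
    intro b _
    rw [if_neg]
    intro hmb
    exact h (hmb ▸ b.isLt)

lemma polyOfCoeffs_degree_le {p : ℕ} (c : Fin (p + 1) → F) :
    (polyOfCoeffs c).degree ≤ (p : WithBot ℕ) := by
  rw [degree_le_iff_coeff_zero]
  intro m hm
  have hm' : p + 1 ≤ m := by exact_mod_cast Nat.succ_le_of_lt (by exact_mod_cast hm)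
  rw [polyOfCoeffs_coeff, dif_neg (by omega)]

lemma polyOfCoeffs_coeffs {d : ℕ} (q : Polynomial F) (hq : q.degree ≤ (d : WithBot ℕ)) :
    polyOfCoeffs (fun j : Fin (d + 1) => q.coeff j) = q := by
  ext m
  rw [polyOfCoeffs_coeff]
  split
  · rfl
  · rename_i h
    rw [eq_comm, coeff_eq_zero_of_degree_lt]
    exact lt_of_le_of_lt hq (by exact_mod_cast by omega)

/-- equality of polynomials of degree ≤ D from equal low coefficients -/
lemma poly_eq_of_coeff_eq {D : ℕ} {P Q : Polynomial F} (hP : P.degree ≤ (D : WithBot ℕ))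
    (hQ : Q.degree ≤ (D : WithBot ℕ)) (h : ∀ k, k ≤ D → P.coeff k = Q.coeff k) : P = Q := by
  ext m
  rcases le_or_gt m D with hm | hm
  · exact h m hm
  · rw [coeff_eq_zero_of_degree_lt (lt_of_le_of_lt hP (by exact_mod_cast hm)),
      coeff_eq_zero_of_degree_lt (lt_of_le_of_lt hQ (by exact_mod_cast hm))]

end Aux
section Minors
variable {F : Type*} [Field F]

open Matrix in
lemma surjective_mulVec_iff {m n : Type*} [Fintype m] [Fintype n] [DecidableEq m] [DecidableEq n]
    [Nonempty m] (A : Matrix m n F) :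
    Function.Surjective A.mulVec ↔ ∃ gc : m → n, (A.submatrix id gc).det ≠ 0 := by
  constructor
  · intro hsurj
    set cols : n → (m → F) := fun v => Aᵀ v with hcols
    have hspan : Submodule.span F (Set.range cols) = ⊤ := by
      rw [Submodule.eq_top_iff']
      intro y
      obtain ⟨x, hx⟩ := hsurj y
      rw [Submodule.mem_span_range_iff_exists_fun]
      refine ⟨x, ?_⟩
      funext k
      rw [← hx]
      simp [Matrix.mulVec, dotProduct, cols, mul_comm]
    obtain ⟨t, hsub, htspan, hli⟩ := exists_linearIndependent F (Set.range cols)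
    rw [hspan] at htspan
    have htfin : t.Finite := hli.setFinite
    haveI := htfin.fintype
    have hcard : Fintype.card t = Fintype.card m := by
      have h1 : Module.finrank F (Submodule.span F t) = t.toFinset.card :=
        finrank_span_set_eq_card hli
      rw [htspan] at h1
      simp only [finrank_top] at h1
      rw [Module.finrank_pi] at h1
      rw [Set.toFinset_card] at h1
      omega
    obtain ⟨e⟩ : Nonempty (m ≃ t) := ⟨(Fintype.equivOfCardEq hcard.symm)⟩
    have hchoose : ∀ k : m, ∃ v : n, cols v = (e k : m → F) := fun k => hsub (e k).2
    choose gc hgc using hchoose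
    refine ⟨gc, ?_⟩
    have hcolsB : (fun k => (A.submatrix id gc)ᵀ k) = fun k => ((e k : m → F)) := by
      funext k
      rw [← hgc k]
      rfl
    have hliB : LinearIndependent F (fun k => (A.submatrix id gc)ᵀ k) := by
      rw [hcolsB]
      exact hli.comp e e.injective
    have hunitB : IsUnit (A.submatrix id gc) :=
      Matrix.linearIndependent_cols_iff_isUnit.mp hliB
    exact ((Matrix.isUnit_iff_isUnit_det _).mp hunitB).ne_zero
  · rintro ⟨gc, hdet⟩ y
    have hunit : IsUnit (A.submatrix id gc) :=
      (Matrix.isUnit_iff_isUnit_det _).mpr (isUnit_iff_ne_zero.mpr hdet)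
    obtain ⟨z, hz⟩ := Matrix.mulVec_surjective_iff_isUnit.mpr hunit y
    refine ⟨fun v => ∑ k ∈ Finset.univ.filter (fun k => gc k = v), z k, ?_⟩
    funext k
    calc ∑ v, A k v * ∑ k' ∈ Finset.univ.filter (fun k' => gc k' = v), z k'
        = ∑ v, ∑ k' ∈ Finset.univ.filter (fun k' => gc k' = v), A k (gc k') * z k' := by
          refine Finset.sum_congr rfl fun v _ => ?_
          rw [Finset.mul_sum]
          exact Finset.sum_congr rfl fun k' hk' => by
            rw [(Finset.mem_filter.mp hk').2]
      _ = ∑ k', A k (gc k') * z k' := Finset.sum_fiberwise _ _ _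
      _ = y k := by rw [← hz]; rfl

end Minors
section Key
variable {F : Type*} [Field F] {r : ℕ}

/-- The key equivalence: exact degree + coprimality iff "every polynomial of degree ≤ D can be
written as a combination with controlled degrees". -/
lemma key_iff (hr : 1 < r) (p : Fin r → ℕ) (g : Fin r → Polynomial F)
    (hg : ∀ i, (g i).degree ≤ (p i : WithBot ℕ)) :
    ((∃ i, (g i).degree = (p i : WithBot ℕ)) ∧
        (1 : Polynomial F) ∈ Ideal.span (Set.range g)) ↔
      ∀ f : Polynomial F, f.degree ≤ ((∑ j, p j : ℕ) : WithBot ℕ) →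
        ∃ h : Fin r → Polynomial F,
          (∀ i, (h i).degree ≤ (((∑ j, p j) - p i : ℕ) : WithBot ℕ)) ∧
          ∑ i, h i * g i = f := by
  set D : ℕ := ∑ j, p j with hD
  have hpile : ∀ i, p i ≤ D := fun i =>
    Finset.single_le_sum (fun _ _ => Nat.zero_le _) (Finset.mem_univ i)
  have hpair : ∀ i j : Fin r, i ≠ j → p i + p j ≤ D := by
    intro i j hij
    calc p i + p j = ∑ k ∈ ({i, j} : Finset (Fin r)), p k := by
          rw [Finset.sum_pair hij]
      _ ≤ D := Finset.sum_le_sum_of_subset (Finset.subset_univ _)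
  constructor
  · rintro ⟨⟨i₀, hdeg⟩, hone⟩ f hf
    obtain ⟨a, ha⟩ : ∃ a : Fin r → Polynomial F, ∑ i, a i * g i = 1 := by
      have := (Submodule.mem_span_range_iff_exists_fun (Polynomial F)).mp hone
      simpa [smul_eq_mul] using this
    have hg0 : g i₀ ≠ 0 := by
      intro h0
      rw [h0, degree_zero] at hdeg
      exact (by simp : (⊥ : WithBot ℕ) ≠ (p i₀ : WithBot ℕ)) hdeg
    set m : Polynomial F := g i₀ * Polynomial.C (g i₀).leadingCoeff⁻¹ with hm
    have hmonic : m.Monic := monic_mul_leadingCoeff_inv hg0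
    have hmdeg : m.degree = (p i₀ : WithBot ℕ) := by
      rw [hm, degree_mul_leadingCoeff_inv _ hg0, hdeg]
    set q : Fin r → Polynomial F := fun i => (f * a i) /ₘ m with hq
    set e : Fin r → Polynomial F := fun i => (f * a i) %ₘ m with he
    set H : Polynomial F := f * a i₀ +
      Polynomial.C (g i₀).leadingCoeff⁻¹ * ∑ i ∈ Finset.univ.erase i₀, q i * g i with hH
    have hone' : a i₀ * g i₀ + ∑ i ∈ Finset.univ.erase i₀, a i * g i = 1 := by
      rw [Finset.add_sum_erase _ (fun i => a i * g i) (Finset.mem_univ i₀)]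
      exact ha
    have he' : ∀ i, e i = f * a i - m * q i := fun i =>
      eq_sub_of_add_eq (modByMonic_add_div (f * a i) m)
    have hsplit : ∑ i, (if i = i₀ then H else e i) * g i
        = H * g i₀ + ∑ i ∈ Finset.univ.erase i₀, e i * g i := by
      rw [← Finset.add_sum_erase _ _ (Finset.mem_univ i₀), if_pos rfl]
      congr 1
      exact Finset.sum_congr rfl fun i hi => by rw [if_neg (Finset.ne_of_mem_erase hi)]
    have hHg : H * g i₀ = f * (a i₀ * g i₀) + m * ∑ i ∈ Finset.univ.erase i₀, q i * g i := by
      rw [hH, add_mul, hm]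
      ring
    have herase : ∑ i ∈ Finset.univ.erase i₀, e i * g i
        = (∑ i ∈ Finset.univ.erase i₀, f * (a i * g i))
          - m * ∑ i ∈ Finset.univ.erase i₀, q i * g i := by
      rw [Finset.mul_sum, ← Finset.sum_sub_distrib]
      exact Finset.sum_congr rfl fun i _ => by rw [he' i]; ring
    have hsum : ∑ i, (if i = i₀ then H else e i) * g i = f := by
      rw [hsplit, hHg, herase, ← Finset.mul_sum]
      linear_combination f * hone'
    have hHg' : H * g i₀ = f - ∑ i ∈ Finset.univ.erase i₀, e i * g i := by
      rw [hHg, herase, ← Finset.mul_sum]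
      linear_combination f * hone'
    have hedeg : ∀ i ∈ Finset.univ.erase i₀, (e i).degree ≤ ((D - p i : ℕ) : WithBot ℕ) := by
      intro i hi
      have hne := Finset.ne_of_mem_erase hi
      have h1 : (e i).degree < (p i₀ : WithBot ℕ) := by
        rw [← hmdeg]
        exact degree_modByMonic_lt _ hmonic
      rcases eq_or_ne (e i) 0 with h0 | h0
      · rw [h0, degree_zero]
        exact bot_le
      · rw [← natDegree_lt_iff_degree_lt h0] at h1
        apply degree_le_of_natDegree_le
        have := hpair i i₀ hne
        omega
    refine ⟨fun i => if i = i₀ then H else e i, ?_, hsum⟩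
    intro i
    rcases eq_or_ne i i₀ with rfl | hne
    · simp only [↓reduceIte]
      rcases eq_or_ne H 0 with h0 | h0
      · rw [h0, degree_zero]
        exact bot_le
      · have hdegR : (f - ∑ j ∈ Finset.univ.erase i, e j * g j).degree ≤ (D : WithBot ℕ) := by
          refine le_trans (degree_sub_le _ _) (max_le hf ?_)
          refine le_trans (degree_sum_le _ _) ?_
          rw [Finset.sup_le_iff]
          intro j hj
          refine le_trans (degree_mul_le _ _) ?_
          calc (e j).degree + (g j).degree
              ≤ ((D - p j : ℕ) : WithBot ℕ) + ((p j : ℕ) : WithBot ℕ) :=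
                add_le_add (hedeg j hj) (hg j)
            _ = (D : WithBot ℕ) := by
                rw [← Nat.cast_add]
                congr 1
                have := hpile j
                omega
        have hmul : H.degree + (p i : WithBot ℕ) ≤ (D : WithBot ℕ) := by
          rw [← hdeg, ← degree_mul, hHg']
          exact hdegR
        rw [degree_eq_natDegree h0, ← Nat.cast_add] at hmul
        have hnat : H.natDegree + p i ≤ D := by exact_mod_cast hmul
        exact degree_le_of_natDegree_le (by omega)
    · simp only [if_neg hne]
      exact hedeg i (Finset.mem_erase.mpr ⟨hne, Finset.mem_univ i⟩)
  · intro hsurj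
    constructor
    · -- some g i has exact degree p i
      obtain ⟨h, hdegs, hsum⟩ := hsurj (Polynomial.X ^ D) (by rw [degree_X_pow])
      by_contra hcon
      push_neg at hcon
      have hlt : ∀ i, (g i).degree < (p i : WithBot ℕ) :=
        fun i => lt_of_le_of_ne (hg i) (hcon i)
      have hbig : (∑ i, h i * g i).degree < (D : WithBot ℕ) := by
        refine lt_of_le_of_lt (degree_sum_le _ _) ?_
        rw [Finset.sup_lt_iff (by exact_mod_cast WithBot.bot_lt_coe D)]
        intro i _
        rcases eq_or_ne (h i * g i) 0 with h0 | h0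
        · rw [h0, degree_zero]
          exact_mod_cast WithBot.bot_lt_coe D
        · have hi : h i ≠ 0 := left_ne_zero_of_mul h0
          have gi : g i ≠ 0 := right_ne_zero_of_mul h0
          rw [← natDegree_lt_iff_degree_lt h0, natDegree_mul hi gi]
          have h1 : (h i).natDegree ≤ D - p i := natDegree_le_of_degree_le (hdegs i)
          have h2 : (g i).natDegree < p i := by
            have h3 := hlt i
            rw [degree_eq_natDegree gi] at h3
            exact_mod_cast h3
          have := hpile i
          omega
      rw [hsum, degree_X_pow] at hbig
      exact lt_irrefl _ hbig
    · -- 1 ∈ span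
      obtain ⟨h, _, hsum⟩ := hsurj 1
        (le_trans degree_one_le (by exact_mod_cast Nat.zero_le D))
      rw [← hsum]
      exact Ideal.sum_mem _ fun i _ =>
        Ideal.mul_mem_left _ _ (Ideal.subset_span ⟨i, rfl⟩)

end Key
section MatrixSetup
variable {F : Type*} [Field F] {r : ℕ}

/-- The generalized Sylvester matrix with polynomial entries. -/
noncomputable def Bmat (p : Fin r → ℕ) (F : Type*) [Field F] :
    Matrix (Fin ((∑ j, p j) + 1)) (Σ i : Fin r, Fin ((∑ j, p j) - p i + 1))
      (MvPolynomial (Σ i : Fin r, Fin (p i + 1)) F) :=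
  fun k v =>
    if h : (v.2 : ℕ) ≤ (k : ℕ) ∧ (k : ℕ) - (v.2 : ℕ) < p v.1 + 1
    then MvPolynomial.X ⟨v.1, ⟨(k : ℕ) - (v.2 : ℕ), h.2⟩⟩ else 0

lemma Amat_apply (p : Fin r → ℕ) (c : (Σ i : Fin r, Fin (p i + 1)) → F)
    (k : Fin ((∑ j, p j) + 1)) (v : Σ i : Fin r, Fin ((∑ j, p j) - p i + 1)) :
    ((Bmat p F).map (MvPolynomial.eval c)) k v
      = (polyOfCoeffs (fun a => c ⟨v.1, a⟩) * Polynomial.X ^ (v.2 : ℕ)).coeff (k : ℕ) := by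
  obtain ⟨i, j⟩ := v
  rw [Matrix.map_apply, coeff_mul_X_pow']
  show MvPolynomial.eval c (Bmat p F k ⟨i, j⟩) = _
  unfold Bmat
  by_cases hA : (j : ℕ) ≤ (k : ℕ)
  · by_cases hB : (k : ℕ) - (j : ℕ) < p i + 1
    · rw [dif_pos ⟨hA, hB⟩, if_pos hA, MvPolynomial.eval_X, polyOfCoeffs_coeff, dif_pos hB]
    · rw [dif_neg (by tauto), if_pos hA, polyOfCoeffs_coeff, dif_neg hB, map_zero]
  · rw [dif_neg (by tauto), if_neg hA, map_zero]

lemma mulVec_Amat (p : Fin r → ℕ) (c : (Σ i : Fin r, Fin (p i + 1)) → F)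
    (x : (Σ i : Fin r, Fin ((∑ j, p j) - p i + 1)) → F) (k : Fin ((∑ j, p j) + 1)) :
    ((Bmat p F).map (MvPolynomial.eval c)).mulVec x k
      = (∑ i, polyOfCoeffs (fun j => x ⟨i, j⟩) *
          polyOfCoeffs (fun a => c ⟨i, a⟩)).coeff (k : ℕ) := by
  have hprod : ∀ i : Fin r, polyOfCoeffs (fun j => x ⟨i, j⟩) * polyOfCoeffs (fun a => c ⟨i, a⟩)
      = ∑ j : Fin ((∑ j', p j') - p i + 1),
          Polynomial.C (x ⟨i, j⟩) * (polyOfCoeffs (fun a => c ⟨i, a⟩) * Polynomial.X ^ (j : ℕ)) := by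
    intro i
    rw [show polyOfCoeffs (fun j => x ⟨i, j⟩)
        = ∑ j : Fin ((∑ j', p j') - p i + 1), Polynomial.C (x ⟨i, j⟩) * Polynomial.X ^ (j : ℕ)
        from rfl, Finset.sum_mul]
    exact Finset.sum_congr rfl fun j _ => by ring
  rw [finset_sum_coeff]
  calc ((Bmat p F).map (MvPolynomial.eval c)).mulVec x k
      = ∑ v : Σ i : Fin r, Fin ((∑ j, p j) - p i + 1),
          ((Bmat p F).map (MvPolynomial.eval c)) k v * x v := by
        simp [Matrix.mulVec, dotProduct]
    _ = ∑ i : Fin r, ∑ j : Fin ((∑ j', p j') - p i + 1),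
          ((Bmat p F).map (MvPolynomial.eval c)) k ⟨i, j⟩ * x ⟨i, j⟩ := by
        rw [← Finset.univ_sigma_univ, Finset.sum_sigma]
    _ = ∑ i : Fin r, (polyOfCoeffs (fun j => x ⟨i, j⟩) *
          polyOfCoeffs (fun a => c ⟨i, a⟩)).coeff (k : ℕ) := by
        refine Finset.sum_congr rfl fun i _ => ?_
        rw [hprod i, finset_sum_coeff]
        refine Finset.sum_congr rfl fun j _ => ?_
        rw [Amat_apply, coeff_C_mul]
        ring

/-- Surjectivity of the Sylvester map is equivalent to the division condition. -/
lemma surj_iff_cond (p : Fin r → ℕ) (c : (Σ i : Fin r, Fin (p i + 1)) → F) :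
    Function.Surjective ((Bmat p F).map (MvPolynomial.eval c)).mulVec ↔
      ∀ f : Polynomial F, f.degree ≤ ((∑ j, p j : ℕ) : WithBot ℕ) →
        ∃ h : Fin r → Polynomial F,
          (∀ i, (h i).degree ≤ (((∑ j, p j) - p i : ℕ) : WithBot ℕ)) ∧
          ∑ i, h i * (polyOfCoeffs fun a => c ⟨i, a⟩) = f := by
  set D : ℕ := ∑ j, p j with hD
  have hpile : ∀ i, p i ≤ D := fun i =>
    Finset.single_le_sum (fun _ _ => Nat.zero_le _) (Finset.mem_univ i)
  constructor
  · intro hsurj f hf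
    obtain ⟨x, hx⟩ := hsurj (fun k : Fin (D + 1) => f.coeff (k : ℕ))
    refine ⟨fun i => polyOfCoeffs (fun j => x ⟨i, j⟩), fun i => polyOfCoeffs_degree_le _, ?_⟩
    refine poly_eq_of_coeff_eq (D := D) ?_ hf ?_
    · refine le_trans (degree_sum_le _ _) ?_
      rw [Finset.sup_le_iff]
      intro i _
      refine le_trans (degree_mul_le _ _) ?_
      calc (polyOfCoeffs fun j => x ⟨i, j⟩).degree + (polyOfCoeffs fun a => c ⟨i, a⟩).degree
          ≤ ((D - p i : ℕ) : WithBot ℕ) + ((p i : ℕ) : WithBot ℕ) :=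
            add_le_add (polyOfCoeffs_degree_le _) (polyOfCoeffs_degree_le _)
        _ = (D : WithBot ℕ) := by
            rw [← Nat.cast_add]
            congr 1
            have := hpile i
            omega
    · intro k hk
      have := congrFun hx ⟨k, by omega⟩
      rw [mulVec_Amat] at this
      exact this
  · intro hcond y
    obtain ⟨h, hdegs, hsum⟩ := hcond (polyOfCoeffs y) (polyOfCoeffs_degree_le _)
    refine ⟨fun v => (h v.1).coeff (v.2 : ℕ), ?_⟩
    funext k
    rw [mulVec_Amat]
    have : ∀ i : Fin r, polyOfCoeffs (fun j : Fin (D - p i + 1) => (h i).coeff (j : ℕ)) = h i :=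
      fun i => polyOfCoeffs_coeffs _ (hdegs i)
    calc (∑ i, polyOfCoeffs (fun j : Fin (D - p i + 1) => (h i).coeff (j : ℕ)) *
            polyOfCoeffs fun a => c ⟨i, a⟩).coeff (k : ℕ)
        = (∑ i, h i * polyOfCoeffs fun a => c ⟨i, a⟩).coeff (k : ℕ) := by
          congr 1
          exact Finset.sum_congr rfl fun i _ => by rw [this i]
      _ = (polyOfCoeffs y).coeff (k : ℕ) := by rw [hsum]
      _ = y k := by
          rw [polyOfCoeffs_coeff, dif_pos k.isLt]

end MatrixSetup
lemma polyOfCoeffs_X_pow {F : Type*} [Field F] (d : ℕ) :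
    polyOfCoeffs (fun a : Fin (d + 1) => if (a : ℕ) = d then (1 : F) else 0)
      = Polynomial.X ^ d := by
  have h := polyOfCoeffs_coeffs (Polynomial.X ^ d : Polynomial F) (by rw [degree_X_pow])
  rw [← h]
  congr 1
  funext a
  rw [coeff_X_pow]

lemma polyOfCoeffs_one {F : Type*} [Field F] (d : ℕ) :
    polyOfCoeffs (fun a : Fin (d + 1) => if (a : ℕ) = 0 then (1 : F) else 0)
      = 1 := by
  have h := polyOfCoeffs_coeffs (1 : Polynomial F)
    (le_trans degree_one_le (by exact_mod_cast Nat.zero_le d))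
  rw [← h]
  congr 1
  funext a
  rw [coeff_one]

theorem coprime_tuples_open_nonempty (F : Type*) [Field F] [IsAlgClosed F]
    (r : ℕ) (hr : 1 < r) (p : Fin r → ℕ) :
    @IsOpen ((Σ i : Fin r, Fin (p i + 1)) → F)
      (affineZariskiTopology _ F)
      {c | (∃ i : Fin r,
            (polyOfCoeffs (fun a => c ⟨i, a⟩)).degree = (p i : WithBot ℕ)) ∧
        (1 : Polynomial F) ∈
          Ideal.span (Set.range fun i : Fin r => polyOfCoeffs (fun a => c ⟨i, a⟩))} ∧
    {c : (Σ i : Fin r, Fin (p i + 1)) → F |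
        (∃ i : Fin r,
            (polyOfCoeffs (fun a => c ⟨i, a⟩)).degree = (p i : WithBot ℕ)) ∧
        (1 : Polynomial F) ∈
          Ideal.span (Set.range fun i : Fin r => polyOfCoeffs (fun a => c ⟨i, a⟩))}.Nonempty := by
  constructor
  · unfold affineZariskiTopology
    apply TopologicalSpace.isOpen_generateFrom_of_mem
    refine ⟨Set.range (fun gc : Fin ((∑ j, p j) + 1) →
        (Σ i : Fin r, Fin ((∑ j, p j) - p i + 1)) => ((Bmat p F).submatrix id gc).det), ?_⟩
    ext c
    have hdet : ∀ gc : Fin ((∑ j, p j) + 1) → (Σ i : Fin r, Fin ((∑ j, p j) - p i + 1)),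
        MvPolynomial.eval c ((Bmat p F).submatrix id gc).det
          = (((Bmat p F).map (MvPolynomial.eval c)).submatrix id gc).det := by
      intro gc
      rw [Matrix.submatrix_map, RingHom.map_det, RingHom.mapMatrix_apply]
    simp only [Set.mem_compl_iff, Set.mem_setOf_eq]
    rw [key_iff hr p _ (fun i => polyOfCoeffs_degree_le _), ← surj_iff_cond,
      surjective_mulVec_iff]
    constructor
    · intro h q hq
      obtain ⟨gc, rfl⟩ := hq
      rw [hdet]
      by_contra hne
      exact h ⟨gc, hne⟩
    · rintro h ⟨gc, hne⟩
      exact hne (by rw [← hdet]; exact h _ ⟨gc, rfl⟩)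
  · set i0 : Fin r := ⟨0, by omega⟩ with hi0
    set i1 : Fin r := ⟨1, hr⟩ with hi1
    have hne01 : i0 ≠ i1 := by
      simp [hi0, hi1, Fin.ext_iff]
    refine ⟨fun v => if (v.1 = i0 ∧ (v.2 : ℕ) = p i0) ∨ (v.1 = i1 ∧ (v.2 : ℕ) = 0)
      then 1 else 0, ?_, ?_⟩
    · refine ⟨i0, ?_⟩
      have : (fun a : Fin (p i0 + 1) =>
          if ((i0 : Fin r) = i0 ∧ (a : ℕ) = p i0) ∨ ((i0 : Fin r) = i1 ∧ (a : ℕ) = 0)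
          then (1 : F) else 0)
          = fun a : Fin (p i0 + 1) => if (a : ℕ) = p i0 then (1 : F) else 0 := by
        funext a
        simp [hne01]
      show (polyOfCoeffs _).degree = _
      rw [this, polyOfCoeffs_X_pow, degree_X_pow]
    · have : (fun a : Fin (p i1 + 1) =>
          if ((i1 : Fin r) = i0 ∧ (a : ℕ) = p i0) ∨ ((i1 : Fin r) = i1 ∧ (a : ℕ) = 0)
          then (1 : F) else 0)
          = fun a : Fin (p i1 + 1) => if (a : ℕ) = 0 then (1 : F) else 0 := by
        funext a
        simp [Ne.symm hne01]
      apply Ideal.subset_span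
      refine ⟨i1, ?_⟩
      show polyOfCoeffs _ = 1
      rw [this, polyOfCoeffs_one]
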